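/- In SL₂(ℝ), with N = ((0,0),(1,0)) (strictly lower nilpotent) and N^T its transpose, for every θ ∈ (−π/2, π/2): exp(θ(N − N^T)) = exp(tan(θ)·N) · exp(log(sec(θ))·[N, N^T]) · exp(−tan(θ)·N^T). -/

import Mathlib

open Matrix Real

attribute [local instance] Matrix.linftyOpNormedRing Matrix.linftyOpNormedAlgebra

lemma exp_of_sq_zero' {𝔸 : Type*} [NormedRing 𝔸] [NormedAlgebra ℝ 𝔸] [CompleteSpace 𝔸]
    (a : 𝔸) (h : a * a = 0) : NormedSpace.exp a = 1 + a := by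
  rw [NormedSpace.exp_eq_tsum ℝ]
  have this : ∀ n ∉ ({0, 1} : Finset ℕ), (((n.factorial : ℝ))⁻¹ • a ^ n) = 0 := by
    intro n hn
    have hn2 : 2 ≤ n := by
      simp only [Finset.mem_insert, Finset.mem_singleton] at hn; omega
    have : a ^ n = 0 := by
      calc a ^ n = a * a * a ^ (n - 2) := by rw [← pow_two, ← pow_add]; congr 1; omega
      _ = 0 := by rw [h, zero_mul]
    simp [this]
  beta_reduce
  rw [tsum_eq_sum this]
  simp [Finset.sum_pair (by norm_num : (0:ℕ) ≠ 1)]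

noncomputable def Jmat : Matrix (Fin 2) (Fin 2) ℝ := !![0, -1; 1, 0]

lemma Jmat_sq : Jmat * Jmat = -1 := by
  ext i j
  fin_cases i <;> fin_cases j <;>
    simp [Jmat, Matrix.mul_apply, Fin.sum_univ_two, Matrix.one_apply]

lemma exp_rot (θ : ℝ) :
    NormedSpace.exp (θ • Jmat)
      = Real.cos θ • (1 : Matrix (Fin 2) (Fin 2) ℝ) + Real.sin θ • Jmat := by
  let f : ℂ →ₐ[ℝ] Matrix (Fin 2) (Fin 2) ℝ := Complex.liftAux Jmat Jmat_sq
  have hf : Continuous f := f.toLinearMap.continuous_of_finiteDimensional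
  have hI : f Complex.I = Jmat := Complex.liftAux_apply_I _ _
  have h1 : θ • Jmat = f (θ • Complex.I) := by rw [_root_.map_smul, hI]
  rw [h1]; refine (NormedSpace.map_exp f hf _).symm.trans ?_
  have h2 : NormedSpace.exp (θ • Complex.I) = Complex.exp (θ * Complex.I) := by
    rw [← Complex.exp_eq_exp_ℂ]
    norm_num [Complex.real_smul]
  rw [h2, Complex.exp_mul_I]
  have : Complex.cos θ + Complex.sin θ * Complex.I
      = ((Real.cos θ : ℂ)) + (Real.sin θ) • Complex.I := by
    rw [Complex.real_smul, ← Complex.ofReal_cos, ← Complex.ofReal_sin]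
  rw [this, map_add, _root_.map_smul, hI, AlgHom.map_coe_real_complex,
    Algebra.algebraMap_eq_smul_one]

/-- The strictly lower nilpotent element `N` of `sl₂(ℝ)`. -/
noncomputable def Nmat : Matrix (Fin 2) (Fin 2) ℝ := !![0, 0; 1, 0]

/-- For `θ ∈ (-π/2, π/2)`:
`exp(θ(N - N^T)) = exp(tan θ · N) · exp(log(sec θ) · [N, N^T]) · exp(-tan θ · N^T)`. -/
theorem exp_theta_N_sub_NT (θ : ℝ) (hθ : θ ∈ Set.Ioo (-(π / 2)) (π / 2)) :
    NormedSpace.exp (θ • (Nmat - Nmatᵀ)) =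
      NormedSpace.exp (Real.tan θ • Nmat) *
        NormedSpace.exp (Real.log ((Real.cos θ)⁻¹) • (Nmat * Nmatᵀ - Nmatᵀ * Nmat)) *
        NormedSpace.exp ((-Real.tan θ) • Nmatᵀ) := by
  have hc : 0 < Real.cos θ := Real.cos_pos_of_mem_Ioo hθ
  have hc' : Real.cos θ ≠ 0 := ne_of_gt hc
  set c := Real.log ((Real.cos θ)⁻¹) with hcdef
  have hNT : Nmatᵀ = !![0, 1; 0, 0] := by
    ext i j; fin_cases i <;> fin_cases j <;> simp [Nmat]
  simp only [hNT]
  -- LHS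
  have hJ : Nmat - !![0, 1; 0, 0] = Jmat := by
    ext i j; fin_cases i <;> fin_cases j <;> simp [Nmat, Jmat]
  rw [hJ, exp_rot]
  -- nilpotent pieces
  have hN2 : Nmat * Nmat = 0 := by
    ext i j; fin_cases i <;> fin_cases j <;>
      simp [Nmat, Matrix.mul_apply, Fin.sum_univ_two]
  have hNT2 : (!![0, 1; 0, 0] : Matrix (Fin 2) (Fin 2) ℝ) * !![0, 1; 0, 0] = 0 := by
    ext i j; fin_cases i <;> fin_cases j <;>
      simp [Matrix.mul_apply, Fin.sum_univ_two]
  have e1 : NormedSpace.exp (Real.tan θ • Nmat) = 1 + Real.tan θ • Nmat :=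
    exp_of_sq_zero' _ (by rw [smul_mul_smul_comm, hN2, smul_zero])
  have e3 : NormedSpace.exp ((-Real.tan θ) • (!![0, 1; 0, 0] : Matrix (Fin 2) (Fin 2) ℝ)) = 1 + (-Real.tan θ) • !![0, 1; 0, 0] :=
    exp_of_sq_zero' _ (by rw [smul_mul_smul_comm, hNT2, smul_zero])
  -- diagonal piece
  have hD : c • (Nmat * !![0, 1; 0, 0] - !![0, 1; 0, 0] * Nmat) = Matrix.diagonal ![-c, c] := by
    ext i j; fin_cases i <;> fin_cases j <;>
      simp [Nmat, Matrix.mul_apply, Fin.sum_univ_two, Matrix.diagonal]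
  have e2 : NormedSpace.exp (c • (Nmat * !![0, 1; 0, 0] - !![0, 1; 0, 0] * Nmat))
      = Matrix.diagonal ![Real.cos θ, (Real.cos θ)⁻¹] := by
    rw [hD, Matrix.exp_diagonal]
    ext i j
    fin_cases i <;> fin_cases j <;>
      simp [Pi.exp_def, Matrix.diagonal, ← Real.exp_eq_exp_ℝ, hcdef, Real.exp_neg,
        Real.exp_log (inv_pos.mpr hc), Real.exp_log hc, inv_inv]
  rw [e1, e2, e3]
  ext i j
  fin_cases i <;> fin_cases j <;>
    simp [Nmat, Jmat, Matrix.mul_apply, Fin.sum_univ_two, Matrix.one_apply,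
      Matrix.diagonal, Real.tan_eq_sin_div_cos] <;>
    field_simp <;>
    nlinarith [Real.sin_sq_add_cos_sq θ]
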